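/- Let n ≥ 5 and let c be a proper edge-colouring of the complete graph K_n. If c uses at least n colours, then there is a vertex subset U with |U| = ⌊(n+3)/2⌋ such that c uses at least n colours on the edges of the induced subgraph K_n[U]. -/

import Mathlib

open Finset Pointwise

namespace Aux7

lemma chooseStep (n k : ℕ) (h : 2*k+1 ≤ n) : n.choose k ≤ n.choose (k+1) := by
  have h1 := Nat.choose_succ_right_eq n k
  have hpos : 0 < n.choose k := Nat.choose_pos (by omega)
  by_contra hlt
  push_neg at hlt
  have : n.choose k * (n - k) < n.choose k * (k+1) := by
    calc n.choose k * (n-k) = n.choose (k+1) * (k+1) := h1.symm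
    _ < n.choose k * (k+1) := by
      have := Nat.mul_lt_mul_of_lt_of_le hlt (le_refl (k+1)) (by omega)
      exact this
  have : n - k < k + 1 := lt_of_mul_lt_mul_left this (by omega)
  omega

lemma le_choose (n : ℕ) : ∀ r, 1 ≤ r → 2*r ≤ n → n ≤ n.choose r := by
  intro r
  induction r with
  | zero => intro h; omega
  | succ k ih =>
    intro _ h2
    rcases Nat.eq_zero_or_pos k with hk|hk
    · subst hk; simp
    · exact le_trans (ih hk (by omega)) (chooseStep n k (by omega))

lemma rowdown (m k : ℕ) : (m+1) * m.choose k = (m+1).choose k * ((m+1) - k) := by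
  rw [← Nat.choose_succ_right_eq]
  exact Nat.add_one_mul_choose_eq m k

lemma smce (N s : ℕ) : (N+1) * N.choose s = (N+1).choose (s+1) * (s+1) := by
  have := Nat.add_one_mul_choose_eq N s
  simpa [Nat.succ_eq_add_one] using this

lemma I1 (N r : ℕ) : (N+2)*(N+1)*(N.choose r) = ((N+2) - r) * ((N+1) - r) * ((N+2).choose r) := by
  have h1 := rowdown N r
  have h2 := rowdown (N+1) r
  calc (N+2)*(N+1)*N.choose r = (N+2)*((N+1)*N.choose r) := by ring
  _ = (N+2)*((N+1).choose r * ((N+1)-r)) := by rw [h1]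
  _ = ((N+2)*(N+1).choose r) * ((N+1)-r) := by ring
  _ = ((N+2).choose r * ((N+2)-r)) * ((N+1)-r) := by rw [h2]
  _ = _ := by ring

lemma I2 (N s : ℕ) : (N+2)*(N+1)*(N.choose s) = (s+2)*(s+1)*((N+2).choose (s+2)) := by
  have h1 := smce N s
  have h2 := smce (N+1) (s+1)
  calc (N+2)*(N+1)*N.choose s = (N+2)*((N+1)*N.choose s) := by ring
  _ = (N+2)*((N+1).choose (s+1) * (s+1)) := by rw [h1]
  _ = ((N+2)*(N+1).choose (s+1)) * (s+1) := by ring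
  _ = ((N+2).choose (s+2) * (s+2)) * (s+1) := by rw [h2]
  _ = _ := by ring

end Aux7

namespace Aux7X
open Aux7

lemma L1 (n r : ℕ) (hpar : n = 2*r+2 ∨ n = 2*r+3) (hn : 5 ≤ n) :
    n.choose r + 1 ≤ (r+1) * ((n-2).choose r) := by
  have hr1 : 1 ≤ r := by omega
  have hC : n ≤ n.choose r := le_choose n r hr1 (by omega)
  rcases hpar with h|h <;> subst h
  · -- n = 2r+2, r ≥ 2
    have hr2 : 2 ≤ r := by omega
    have hI := I1 (2*r) r
    have e1 : 2*r+2 - r = r+2 := by omega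
    have e2 : 2*r+1 - r = r+1 := by omega
    rw [show (2*r)+2 = 2*r+2 from rfl, show (2*r)+1 = 2*r+1 from rfl, e1, e2] at hI
    -- hI : (2r+2)*(2r+1)*choose (2r) r = (r+2)*(r+1)*choose (2r+2) r
    have hgoal : (2*r+2)*(2*r+1) * ((2*r+2).choose r + 1)
        ≤ (2*r+2)*(2*r+1) * ((r+1) * ((2*r+2-2).choose r)) := by
      rw [show 2*r+2-2 = 2*r from by omega]
      have : (2*r+2)*(2*r+1) * ((r+1) * ((2*r).choose r))
          = (r+1) * ((2*r+2)*(2*r+1)*((2*r).choose r)) := by ring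
      rw [this, hI]
      obtain ⟨t, ht⟩ : ∃ t, r = t+2 := ⟨r-2, by omega⟩
      subst ht
      set C := (2*(t+2)+2).choose (t+2) with hCdef
      have h1 : (2*t+6)*((t+1)*(t+2)*(t+3)) ≤ C*((t+1)*(t+2)*(t+3)) :=
        Nat.mul_le_mul_right _ (by omega)
      have h2 : 2*t+5 ≤ (t+1)*(t+2)*(t+3) := by nlinarith [Nat.zero_le (t^3), Nat.zero_le (t^2)]
      nlinarith [h1, h2]
    exact Nat.le_of_mul_le_mul_left hgoal (by positivity)
  · -- n = 2r+3
    have hI := I1 (2*r+1) r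
    have e1 : 2*r+1+2 - r = r+3 := by omega
    have e2 : 2*r+1+1 - r = r+2 := by omega
    rw [e1, e2] at hI
    rw [show 2*r+1+2 = 2*r+3 from by omega, show 2*r+1+1 = 2*r+2 from by omega] at hI
    have hgoal : (2*r+3)*(2*r+2) * ((2*r+3).choose r + 1)
        ≤ (2*r+3)*(2*r+2) * ((r+1) * ((2*r+3-2).choose r)) := by
      rw [show 2*r+3-2 = 2*r+1 from by omega]
      have : (2*r+3)*(2*r+2) * ((r+1) * ((2*r+1).choose r))
          = (r+1) * ((2*r+3)*(2*r+2)*((2*r+1).choose r)) := by ring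
      rw [this, hI]
      obtain ⟨t, ht⟩ : ∃ t, r = t+1 := ⟨r-1, by omega⟩
      subst ht
      set C := (2*(t+1)+3).choose (t+1) with hCdef
      have h1 : (2*t+5)*((t+1)*(t+2)*(t+2)) ≤ C*((t+1)*(t+2)*(t+2)) :=
        Nat.mul_le_mul_right _ (by omega)
      have h2 : 2*t+4 ≤ (t+1)*(t+2)*(t+2) := by nlinarith [Nat.zero_le (t^3), Nat.zero_le (t^2)]
      nlinarith [h1, h2]
    exact Nat.le_of_mul_le_mul_left hgoal (by positivity)

lemma L2base (n r : ℕ) (hpar : n = 2*r+2 ∨ n = 2*r+3) (hr : 2 ≤ r) :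
    (r+1) * (2^2 * ((n-2).choose (r-2))) + 2 * n.choose r + 1 ≤ (r+1) * n.choose r := by
  obtain ⟨t, ht⟩ : ∃ t, r = t+2 := ⟨r-2, by omega⟩
  subst ht
  rcases hpar with h|h <;> subst h
  · have hI := I2 (2*t+4) t
    rw [show 2*t+4+2 = 2*(t+2)+2 from by omega] at hI
    set C := (2*(t+2)+2).choose (t+2) with hCdef
    set D := (2*t+4).choose t with hDdef
    have hC : 2*t+6 ≤ C := by
      have := le_choose (2*(t+2)+2) (t+2) (by omega) (by omega)
      omega
    have hgoal : (2*t+6)*(2*t+5) * ((t+2+1) * (2^2 * ((2*(t+2)+2-2).choose (t+2-2))) + 2 * C + 1)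
        ≤ (2*t+6)*(2*t+5) * ((t+2+1) * C) := by
      rw [show 2*(t+2)+2-2 = 2*t+4 from by omega, show t+2-2 = t from by omega]
      have hPD : (2*t+6)*(2*t+5)*D = (t+2)*(t+1)*C := by
        rw [hDdef, hCdef]; rw [show 2*t+6 = 2*t+4+2 from by omega, show 2*t+5 = 2*t+4+1 from by omega]
        exact hI
      have h1 : (2*t+6)*(t+1) ≤ C*(t+1) := Nat.mul_le_mul_right _ (by omega)
      have e1 : (2*t+6)*(2*t+5) * ((t+2+1) * (2^2 * D) + 2*C+1)
          = 4*(t+3)*((t+2)*(t+1)*C) + (2*t+6)*(2*t+5)*(2*C+1) := by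
        rw [← hPD]; ring
      rw [e1]
      have h3 := Nat.mul_le_mul_left (2*(t+3)) h1
      nlinarith [h3, Nat.zero_le (t^3), Nat.zero_le (t^2), Nat.zero_le t]
    exact Nat.le_of_mul_le_mul_left hgoal (by positivity)
  · have hI := I2 (2*t+5) t
    rw [show 2*t+5+2 = 2*(t+2)+3 from by omega] at hI
    set C := (2*(t+2)+3).choose (t+2) with hCdef
    set D := (2*t+5).choose t with hDdef
    have hC : 2*t+7 ≤ C := by
      have := le_choose (2*(t+2)+3) (t+2) (by omega) (by omega)
      omega
    have hgoal : (2*t+7)*(2*t+6) * ((t+2+1) * (2^2 * ((2*(t+2)+3-2).choose (t+2-2))) + 2 * C + 1)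
        ≤ (2*t+7)*(2*t+6) * ((t+2+1) * C) := by
      rw [show 2*(t+2)+3-2 = 2*t+5 from by omega, show t+2-2 = t from by omega]
      have hPD : (2*t+7)*(2*t+6)*D = (t+2)*(t+1)*C := by
        rw [hDdef, hCdef]; rw [show 2*t+7 = 2*t+5+2 from by omega, show 2*t+6 = 2*t+5+1 from by omega]
        exact hI
      have h1 : (2*t+7)*(t+1) ≤ C*(t+1) := Nat.mul_le_mul_right _ (by omega)
      have e1 : (2*t+7)*(2*t+6) * ((t+2+1) * (2^2 * D) + 2*C+1)
          = 4*(t+3)*((t+2)*(t+1)*C) + (2*t+7)*(2*t+6)*(2*C+1) := by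
        rw [← hPD]; ring
      rw [e1]
      have h3 := Nat.mul_le_mul_left (6*(t+3)) h1
      nlinarith [h3, Nat.zero_le (t^3), Nat.zero_le (t^2), Nat.zero_le t]
    exact Nat.le_of_mul_le_mul_left hgoal (by positivity)

lemma L2step (n r a : ℕ) (hpar : n = 2*r+2 ∨ n = 2*r+3) (ha : 2 ≤ a) (har : a+1 ≤ r)
    (IH : (r+1) * (2^a * ((n-a).choose (r-a))) + a * n.choose r + 1 ≤ (r+1) * n.choose r) :
    (r+1) * (2^(a+1) * ((n-(a+1)).choose (r-(a+1)))) + (a+1) * n.choose r + 1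
      ≤ (r+1) * n.choose r := by
  obtain ⟨d, hd⟩ : ∃ d, r = a+1+d := ⟨r-(a+1), by omega⟩
  subst hd
  set C := n.choose (a+1+d) with hCdef
  have hC : n ≤ C := le_choose n (a+1+d) (by omega) (by omega)
  rcases hpar with h|h <;> subst h
  · -- n = 2a+2d+4
    have hsm := smce (a+2*d+3) d
    rw [show a+2*d+3+1 = a+2*d+4 from by omega] at hsm
    set Ca := (a+2*d+4).choose (d+1) with hCadef
    set Ca1 := (a+2*d+3).choose d with hCa1def
    have hid : (a+2*d+4) * Ca1 = Ca * (d+1) := hsm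
    have hCa : (2*(a+1+d)+2) - a = a+2*d+4 := by omega
    have hCr : (a+1+d) - a = d+1 := by omega
    have hCa' : (2*(a+1+d)+2) - (a+1) = a+2*d+3 := by omega
    have hCr' : (a+1+d) - (a+1) = d := by omega
    rw [hCa, hCr] at IH
    rw [hCa', hCr']
    -- goal: (a+1+d+1) * (2^(a+1) * Ca1) + (a+1)*C + 1 ≤ (a+1+d+1)*C
    have H2 := Nat.mul_le_mul_left (2*(d+1)) IH
    have hkey : 2*(d+1)*((a+1+d+1)*C) + (a+2*d+4)*((a+1)*C+1)
        ≤ (a+2*d+4)*((a+1+d+1)*C) + 2*(d+1)*(a*C+1) := by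
      have h4 : (d+1)*a*(2*a+2*d+4) ≤ (d+1)*a*C := Nat.mul_le_mul_left _ (by omega)
      nlinarith [h4, Nat.zero_le (d*a), Nat.zero_le (d*d), Nat.zero_le d, Nat.zero_le a]
    have hgoal : (a+2*d+4) * ((a+1+d+1) * (2^(a+1) * Ca1) + (a+1)*C + 1)
        ≤ (a+2*d+4) * ((a+1+d+1)*C) := by
      have e1 : (a+2*d+4) * ((a+1+d+1) * (2^(a+1) * Ca1) + (a+1)*C + 1)
          = (a+1+d+1)*(2^a)*2*((a+2*d+4)*Ca1) + (a+2*d+4)*((a+1)*C+1) := by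
        rw [pow_succ]; ring
      rw [e1, hid]
      have e2 : (a+1+d+1)*(2^a)*2*(Ca*(d+1)) + (a+2*d+4)*((a+1)*C+1) + 2*(d+1)*(a*C+1)
          = 2*(d+1)*((a+1+d+1) * (2^a * Ca) + a*C+1) + (a+2*d+4)*((a+1)*C+1) := by ring
      have step1 : (a+1+d+1)*(2^a)*2*(Ca*(d+1)) + (a+2*d+4)*((a+1)*C+1) + 2*(d+1)*(a*C+1)
          ≤ (a+2*d+4)*((a+1+d+1)*C) + 2*(d+1)*(a*C+1) := by
        rw [e2]
        calc 2*(d+1)*((a+1+d+1) * (2^a * Ca) + a*C+1) + (a+2*d+4)*((a+1)*C+1)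
            ≤ 2*(d+1)*((a+1+d+1)*C) + (a+2*d+4)*((a+1)*C+1) := by
              exact Nat.add_le_add_right H2 _
          _ ≤ (a+2*d+4)*((a+1+d+1)*C) + 2*(d+1)*(a*C+1) := hkey
      omega
    exact Nat.le_of_mul_le_mul_left hgoal (by positivity)
  · -- n = 2a+2d+5
    have hsm := smce (a+2*d+4) d
    rw [show a+2*d+4+1 = a+2*d+5 from by omega] at hsm
    set Ca := (a+2*d+5).choose (d+1) with hCadef
    set Ca1 := (a+2*d+4).choose d with hCa1def
    have hid : (a+2*d+5) * Ca1 = Ca * (d+1) := hsm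
    have hCa : (2*(a+1+d)+3) - a = a+2*d+5 := by omega
    have hCr : (a+1+d) - a = d+1 := by omega
    have hCa' : (2*(a+1+d)+3) - (a+1) = a+2*d+4 := by omega
    have hCr' : (a+1+d) - (a+1) = d := by omega
    rw [hCa, hCr] at IH
    rw [hCa', hCr']
    have H2 := Nat.mul_le_mul_left (2*(d+1)) IH
    have hkey : 2*(d+1)*((a+1+d+1)*C) + (a+2*d+5)*((a+1)*C+1)
        ≤ (a+2*d+5)*((a+1+d+1)*C) + 2*(d+1)*(a*C+1) := by
      have h4 : (d+1)*(a+1)*(2*a+2*d+5) ≤ (d+1)*(a+1)*C := Nat.mul_le_mul_left _ (by omega)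
      nlinarith [h4, Nat.zero_le (d*a), Nat.zero_le (d*d), Nat.zero_le d, Nat.zero_le a]
    have hgoal : (a+2*d+5) * ((a+1+d+1) * (2^(a+1) * Ca1) + (a+1)*C + 1)
        ≤ (a+2*d+5) * ((a+1+d+1)*C) := by
      have e1 : (a+2*d+5) * ((a+1+d+1) * (2^(a+1) * Ca1) + (a+1)*C + 1)
          = (a+1+d+1)*(2^a)*2*((a+2*d+5)*Ca1) + (a+2*d+5)*((a+1)*C+1) := by
        rw [pow_succ]; ring
      rw [e1, hid]
      have e2 : (a+1+d+1)*(2^a)*2*(Ca*(d+1)) + (a+2*d+5)*((a+1)*C+1) + 2*(d+1)*(a*C+1)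
          = 2*(d+1)*((a+1+d+1) * (2^a * Ca) + a*C+1) + (a+2*d+5)*((a+1)*C+1) := by ring
      have step1 : (a+1+d+1)*(2^a)*2*(Ca*(d+1)) + (a+2*d+5)*((a+1)*C+1) + 2*(d+1)*(a*C+1)
          ≤ (a+2*d+5)*((a+1+d+1)*C) + 2*(d+1)*(a*C+1) := by
        rw [e2]
        calc 2*(d+1)*((a+1+d+1) * (2^a * Ca) + a*C+1) + (a+2*d+5)*((a+1)*C+1)
            ≤ 2*(d+1)*((a+1+d+1)*C) + (a+2*d+5)*((a+1)*C+1) := by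
              exact Nat.add_le_add_right H2 _
          _ ≤ (a+2*d+5)*((a+1+d+1)*C) + 2*(d+1)*(a*C+1) := hkey
      omega
    exact Nat.le_of_mul_le_mul_left hgoal (by positivity)

lemma L2 (n r : ℕ) (hpar : n = 2*r+2 ∨ n = 2*r+3) :
    ∀ a, 2 ≤ a → a ≤ r →
      (r+1) * (2^a * ((n-a).choose (r-a))) + a * n.choose r + 1 ≤ (r+1) * n.choose r := by
  intro a ha
  induction a, ha using Nat.le_induction with
  | base => intro h; exact L2base n r hpar h
  | succ a ha IH => intro h1; exact L2step n r a hpar ha h1 (IH (by omega))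

end Aux7X

namespace Aux7G
open Aux7 Aux7X

variable {n : ℕ} (c : Fin n → Fin n → ℕ)

def edg (S : Finset (Fin n)) : Finset (Fin n × Fin n) := (S ×ˢ S).filter fun p => p.1 < p.2

def colS (S : Finset (Fin n)) : Finset ℕ := (edg S).image fun p => c p.1 p.2

def cls (χ : ℕ) : Finset (Fin n × Fin n) := (edg (univ : Finset (Fin n))).filter fun p => c p.1 p.2 = χ

lemma mem_edg {S : Finset (Fin n)} {p : Fin n × Fin n} :
    p ∈ edg S ↔ p.1 ∈ S ∧ p.2 ∈ S ∧ p.1 < p.2 := by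
  simp [edg, Finset.mem_filter, Finset.mem_product, and_assoc]

lemma colS_eq (hsymm : ∀ i j, c i j = c j i) (S : Finset (Fin n)) :
    ((S ×ˢ S).filter fun p => p.1 ≠ p.2).image (fun p => c p.1 p.2) = colS c S := by
  ext x
  simp only [colS, Finset.mem_image, Finset.mem_filter, Finset.mem_product]
  constructor
  · rintro ⟨⟨a,b⟩, ⟨⟨ha, hb⟩, hne⟩, rfl⟩
    rcases lt_or_gt_of_ne hne with h|h
    · exact ⟨(a,b), mem_edg.2 ⟨ha, hb, h⟩, rfl⟩
    · exact ⟨(b,a), mem_edg.2 ⟨hb, ha, h⟩, (hsymm b a).symm ▸ (hsymm a b ▸ rfl)⟩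
  · rintro ⟨⟨a,b⟩, hab, rfl⟩
    obtain ⟨ha, hb, hlt⟩ := mem_edg.1 hab
    exact ⟨(a,b), ⟨⟨ha, hb⟩, ne_of_lt hlt⟩, rfl⟩

variable (hsymm : ∀ i j, c i j = c j i)
  (hproper : ∀ i j k : Fin n, i ≠ j → i ≠ k → j ≠ k → c i j ≠ c i k)

include hsymm hproper in
lemma matching {χ : ℕ} {p q : Fin n × Fin n} (hp : p ∈ cls c χ) (hq : q ∈ cls c χ)
    (hne : p ≠ q) : p.1 ≠ q.1 ∧ p.1 ≠ q.2 ∧ p.2 ≠ q.1 ∧ p.2 ≠ q.2 := by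
  obtain ⟨hpe, hpc⟩ := Finset.mem_filter.1 hp
  obtain ⟨-, -, hplt⟩ := mem_edg.1 hpe
  obtain ⟨hqe, hqc⟩ := Finset.mem_filter.1 hq
  obtain ⟨-, -, hqlt⟩ := mem_edg.1 hqe
  refine ⟨?_, ?_, ?_, ?_⟩
  · intro h
    have hne2 : p.2 ≠ q.2 := by
      intro h2; exact hne (Prod.ext h h2)
    exact hproper p.1 p.2 q.2 (ne_of_lt hplt) (by rw [h]; exact ne_of_lt hqlt) hne2
      (by rw [hpc, h, hqc])
  · intro h
    have hq1p1 : q.1 < p.1 := by rw [h]; exact hqlt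
    have hcol : c p.1 q.1 = χ := by rw [hsymm p.1 q.1, h]; exact hqc
    exact hproper p.1 p.2 q.1 (ne_of_lt hplt) hq1p1.ne' (lt_trans hq1p1 hplt).ne'
      (hpc.trans hcol.symm)
  · intro h
    have hp2q2 : p.2 < q.2 := by rw [h]; exact hqlt
    have hcol1 : c p.2 p.1 = χ := by rw [hsymm p.2 p.1]; exact hpc
    have hcol2 : c p.2 q.2 = χ := by rw [h]; exact hqc
    exact hproper p.2 p.1 q.2 hplt.ne' hp2q2.ne (lt_trans hplt hp2q2).ne
      (hcol1.trans hcol2.symm)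
  · intro h
    have hne1 : p.1 ≠ q.1 := by
      intro h1; exact hne (Prod.ext h1 h)
    have hq1p2 : q.1 < p.2 := by rw [h]; exact hqlt
    have hcol1 : c p.2 p.1 = χ := by rw [hsymm p.2 p.1]; exact hpc
    have hcol2 : c p.2 q.1 = χ := by rw [h, hsymm q.2 q.1]; exact hqc
    exact hproper p.2 p.1 q.1 hplt.ne' hq1p2.ne' hne1 (hcol1.trans hcol2.symm)

include hsymm hproper in
lemma cls_card_le (χ : ℕ) : 2 * (cls c χ).card ≤ n := by
  classical
  have hdisj : ∀ p ∈ cls c χ, ∀ q ∈ cls c χ, p ≠ q →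
      Disjoint ({p.1, p.2} : Finset (Fin n)) {q.1, q.2} := by
    intro p hp q hq hne
    obtain ⟨h1, h2, h3, h4⟩ := matching c hsymm hproper hp hq hne
    simp only [Finset.disjoint_left, Finset.mem_insert, Finset.mem_singleton]
    rintro x (rfl|rfl) <;> push_neg <;> exact ⟨by assumption, by assumption⟩
  have hcard := Finset.card_biUnion hdisj
  have heach : ∀ p ∈ cls c χ, ({p.1, p.2} : Finset (Fin n)).card = 2 := by
    intro p hp
    obtain ⟨hpe, -⟩ := Finset.mem_filter.1 hp
    obtain ⟨-, -, hplt⟩ := mem_edg.1 hpe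
    exact Finset.card_pair (ne_of_lt hplt)
  rw [Finset.sum_congr rfl heach, Finset.sum_const, smul_eq_mul] at hcard
  have hsub : ((cls c χ).biUnion fun p => ({p.1, p.2} : Finset (Fin n))) ⊆ univ :=
    Finset.subset_univ _
  have := Finset.card_le_card hsub
  rw [hcard] at this
  simpa [mul_comm] using this

def capt (χ : ℕ) (O : Finset (Fin n)) : Prop := ∃ p ∈ cls c χ, p.1 ∉ O ∧ p.2 ∉ O

instance (χ : ℕ) (O : Finset (Fin n)) : Decidable (capt c χ O) := by
  unfold capt; infer_instance

include hsymm hproper in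
lemma choice_injOn {χ : ℕ} {f : Fin n × Fin n → Fin n}
    (hsel : ∀ p ∈ cls c χ, f p = p.1 ∨ f p = p.2) : Set.InjOn f (cls c χ) := by
  intro p hp q hq heq
  by_contra hne
  obtain ⟨h1, h2, h3, h4⟩ := matching c hsymm hproper (Finset.mem_coe.1 hp) (Finset.mem_coe.1 hq) hne
  rcases hsel p (Finset.mem_coe.1 hp) with h|h <;> rcases hsel q (Finset.mem_coe.1 hq) with h'|h' <;>
    rw [h, h'] at heq <;> tauto

include hsymm hproper in
lemma capt_of_big {χ : ℕ} {r : ℕ} {O : Finset (Fin n)} (hO : O.card = r)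
    (hbig : r + 1 ≤ (cls c χ).card) : capt c χ O := by
  by_contra hcon
  unfold capt at hcon
  push_neg at hcon
  have hmap : ∀ p ∈ cls c χ, (if p.1 ∈ O then p.1 else p.2) ∈ O := by
    intro p hp
    split_ifs with h
    · exact h
    · exact hcon p hp h
  have hinj := choice_injOn c hsymm hproper (χ := χ) (f := fun p => if p.1 ∈ O then p.1 else p.2)
    (by intro p _; split_ifs <;> simp)
  have := Finset.card_le_card_of_injOn _ hmap hinj
  omega

include hsymm hproper in
lemma capt_single {χ r : ℕ} (ha : (cls c χ).card = 1) :
    (n-2).choose r ≤ ((powersetCard r (univ : Finset (Fin n))).filter (fun O => capt c χ O)).card := by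
  obtain ⟨p, hp⟩ := Finset.card_eq_one.1 ha
  have hpmem : p ∈ cls c χ := by rw [hp]; exact Finset.mem_singleton_self p
  have hplt : p.1 < p.2 := (mem_edg.1 (Finset.mem_filter.1 hpmem).1).2.2
  have hsub : powersetCard r ({p.1, p.2}ᶜ : Finset (Fin n)) ⊆
      (powersetCard r univ).filter (fun O => capt c χ O) := by
    intro O hO
    obtain ⟨hOsub, hOcard⟩ := Finset.mem_powersetCard.1 hO
    refine Finset.mem_filter.2 ⟨Finset.mem_powersetCard.2 ⟨Finset.subset_univ _, hOcard⟩,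
      ⟨p, hpmem, ?_, ?_⟩⟩
    · intro hin
      have := hOsub hin
      simp [Finset.mem_compl] at this
    · intro hin
      have := hOsub hin
      simp [Finset.mem_compl] at this
  have hle := Finset.card_le_card hsub
  rw [Finset.card_powersetCard] at hle
  have hcc : ({p.1, p.2}ᶜ : Finset (Fin n)).card = n - 2 := by
    rw [Finset.card_compl, Finset.card_pair (ne_of_lt hplt)]
    simp
  rwa [hcc] at hle

include hsymm hproper in
lemma miss_le {χ : ℕ} (r : ℕ) (ha : (cls c χ).card ≤ r) :
    ((powersetCard r (univ : Finset (Fin n))).filter (fun O => ¬ capt c χ O)).card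
      ≤ 2^((cls c χ).card) * (n - (cls c χ).card).choose (r - (cls c χ).card) := by
  set M := cls c χ with hM
  set a := M.card with haM
  set 𝒯 := M.powerset.image (fun S => M.image (fun p => if p ∈ S then p.1 else p.2)) with hT
  set g : Finset (Fin n) → Finset (Fin n) :=
    fun O => M.image (fun p => if p.1 ∈ O then p.1 else p.2) with hg
  have hgT : ∀ O, g O ∈ 𝒯 := by
    intro O
    refine Finset.mem_image.2 ⟨M.filter (fun p => p.1 ∈ O),
      Finset.mem_powerset.2 (Finset.filter_subset _ _), ?_⟩
    apply Finset.image_congr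
    intro p hp
    rw [Finset.mem_coe] at hp
    by_cases h : p.1 ∈ O <;> simp [h, Finset.mem_filter, hp]
  have hTcard : ∀ T ∈ 𝒯, T.card = a := by
    intro T hT'
    obtain ⟨S, _, rfl⟩ := Finset.mem_image.1 hT'
    rw [Finset.card_image_of_injOn (choice_injOn c hsymm hproper
      (by intro p _; by_cases h : p ∈ S
          · left; simp [h]
          · right; simp [h]))]
  have hgcard : ∀ O, (g O).card = a := fun O =>
    Finset.card_image_of_injOn (choice_injOn c hsymm hproper
      (by intro p _; by_cases h : p.1 ∈ O
          · left; simp [h]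
          · right; simp [h]))
  have hgsubs : ∀ O ∈ (powersetCard r (univ : Finset (Fin n))).filter (fun O => ¬ capt c χ O),
      g O ⊆ O := by
    intro O hO x hx
    obtain ⟨-, hnc⟩ := Finset.mem_filter.1 hO
    unfold capt at hnc
    push_neg at hnc
    obtain ⟨p, hp, rfl⟩ := Finset.mem_image.1 hx
    split_ifs with h
    · exact h
    · exact hnc p hp h
  have hmaps : ∀ O ∈ (powersetCard r (univ : Finset (Fin n))).filter (fun O => ¬ capt c χ O),
      (⟨g O, O \ g O⟩ : (_ : Finset (Fin n)) × Finset (Fin n)) ∈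
        𝒯.sigma (fun T => powersetCard (r-a) ((univ : Finset (Fin n)) \ T)) := by
    intro O hO
    obtain ⟨hOp, -⟩ := Finset.mem_filter.1 hO
    obtain ⟨-, hOcard⟩ := Finset.mem_powersetCard.1 hOp
    refine Finset.mem_sigma.2 ⟨hgT O, Finset.mem_powersetCard.2 ⟨?_, ?_⟩⟩
    · intro x hx
      rw [Finset.mem_sdiff] at hx ⊢
      exact ⟨Finset.mem_univ x, hx.2⟩
    · rw [Finset.card_sdiff_of_subset (hgsubs O hO), hgcard O, hOcard]
  have hinj : Set.InjOn (fun O => (⟨g O, O \ g O⟩ : (_ : Finset (Fin n)) × Finset (Fin n)))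
      ((powersetCard r (univ : Finset (Fin n))).filter (fun O => ¬ capt c χ O)) := by
    intro O hO O' hO' heq
    simp only [Sigma.mk.inj_iff] at heq
    obtain ⟨h1, h2⟩ := heq
    have h2' : O \ g O = O' \ g O' := eq_of_heq h2
    have e1 := Finset.union_sdiff_of_subset (hgsubs O (Finset.mem_coe.1 hO))
    have e2 := Finset.union_sdiff_of_subset (hgsubs O' (Finset.mem_coe.1 hO'))
    rw [← e1, ← e2, h2', h1]
  have hcle := Finset.card_le_card_of_injOn _ hmaps hinj
  have htarget : (𝒯.sigma (fun T => powersetCard (r-a) ((univ : Finset (Fin n)) \ T))).card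
      ≤ 2^a * (n-a).choose (r-a) := by
    rw [Finset.card_sigma]
    have : ∀ T ∈ 𝒯, (powersetCard (r-a) ((univ : Finset (Fin n)) \ T)).card
        = (n-a).choose (r-a) := by
      intro T hT'
      rw [Finset.card_powersetCard, Finset.card_sdiff_of_subset (Finset.subset_univ T), hTcard T hT']
      simp
    rw [Finset.sum_congr rfl this, Finset.sum_const, smul_eq_mul]
    apply Nat.mul_le_mul_right
    calc 𝒯.card ≤ M.powerset.card := Finset.card_image_le
    _ = 2^a := by rw [Finset.card_powerset]
  exact hcle.trans htarget

lemma edg_card : 2 * (edg (univ : Finset (Fin n))).card + n = n * n := by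
  classical
  have h0 : ((univ ×ˢ univ : Finset (Fin n × Fin n))).card = n*n := by
    simp [Finset.card_product]
  have hsplit1 := Finset.card_filter_add_card_filter_not
    (s := (univ ×ˢ univ : Finset (Fin n × Fin n))) (p := fun p => p.1 ≠ p.2)
  have hdiag : ((univ ×ˢ univ : Finset (Fin n × Fin n)).filter fun p => ¬ p.1 ≠ p.2).card = n := by
    rw [show ((univ ×ˢ univ : Finset (Fin n × Fin n)).filter fun p => ¬ p.1 ≠ p.2)
        = (univ : Finset (Fin n)).image (fun i => (i,i)) from ?_]
    · rw [Finset.card_image_of_injective _ (fun a b h => (Prod.ext_iff.1 h).1)]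
      simp
    · ext ⟨x, y⟩
      simp only [Finset.mem_filter, Finset.mem_product, Finset.mem_univ, true_and, not_not,
        Finset.mem_image, Prod.mk.injEq]
      aesop
  set D := (univ ×ˢ univ : Finset (Fin n × Fin n)).filter fun p => p.1 ≠ p.2 with hD
  have hsplit2 := Finset.card_filter_add_card_filter_not
    (s := D) (p := fun p => p.1 < p.2)
  have hlt : D.filter (fun p => p.1 < p.2) = edg univ := by
    ext p
    constructor
    · intro hp
      obtain ⟨-, hlt'⟩ := Finset.mem_filter.1 hp
      exact mem_edg.2 ⟨Finset.mem_univ _, Finset.mem_univ _, hlt'⟩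
    · intro hp
      obtain ⟨-, -, hlt'⟩ := mem_edg.1 hp
      exact Finset.mem_filter.2 ⟨Finset.mem_filter.2 ⟨Finset.mem_product.2
        ⟨Finset.mem_univ _, Finset.mem_univ _⟩, ne_of_lt hlt'⟩, hlt'⟩
  have hgt : (D.filter (fun p => ¬ p.1 < p.2)).card = (edg (univ : Finset (Fin n))).card := by
    apply Finset.card_bij (fun p _ => (p.2, p.1))
    · intro p hp
      obtain ⟨hpD, hnlt⟩ := Finset.mem_filter.1 hp
      obtain ⟨-, hne⟩ := Finset.mem_filter.1 hpD
      refine mem_edg.2 ⟨Finset.mem_univ _, Finset.mem_univ _, ?_⟩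
      rcases lt_or_gt_of_ne hne with h|h
      · exact absurd h hnlt
      · exact h
    · intro p _ q _ h
      obtain ⟨h1, h2⟩ := Prod.ext_iff.1 h
      exact Prod.ext h2 h1
    · intro q hq
      obtain ⟨-, -, hlt'⟩ := mem_edg.1 hq
      exact ⟨(q.2, q.1), Finset.mem_filter.2 ⟨Finset.mem_filter.2
        ⟨Finset.mem_product.2 ⟨Finset.mem_univ _, Finset.mem_univ _⟩, ne_of_gt hlt'⟩,
        not_lt.2 (le_of_lt hlt')⟩, rfl⟩
  rw [hlt] at hsplit2
  omega

lemma sum_cls : ∑ χ ∈ colS c (univ : Finset (Fin n)), (cls c χ).card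
    = (edg (univ : Finset (Fin n))).card := by
  classical
  exact (Finset.card_eq_sum_card_fiberwise (f := fun p => c p.1 p.2)
    (s := edg (univ : Finset (Fin n))) (t := colS c univ)
    (fun p hp => Finset.mem_image.2 ⟨p, hp, rfl⟩)).symm

lemma cls_pos {χ : ℕ} (hχ : χ ∈ colS c (univ : Finset (Fin n))) : 1 ≤ (cls c χ).card := by
  obtain ⟨p, hp, rfl⟩ := Finset.mem_image.1 hχ
  exact Finset.card_pos.2 ⟨p, Finset.mem_filter.2 ⟨hp, rfl⟩⟩

lemma colS_compl (O : Finset (Fin n)) :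
    colS c Oᶜ = (colS c (univ : Finset (Fin n))).filter (fun χ => capt c χ O) := by
  ext x
  constructor
  · intro hx
    obtain ⟨p, hp, rfl⟩ := Finset.mem_image.1 hx
    obtain ⟨h1, h2, hlt⟩ := mem_edg.1 hp
    rw [Finset.mem_compl] at h1 h2
    refine Finset.mem_filter.2 ⟨Finset.mem_image.2 ⟨p, mem_edg.2 ⟨Finset.mem_univ _, Finset.mem_univ _, hlt⟩, rfl⟩, ?_⟩
    exact ⟨p, Finset.mem_filter.2 ⟨mem_edg.2 ⟨Finset.mem_univ _, Finset.mem_univ _, hlt⟩, rfl⟩, h1, h2⟩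
  · intro hx
    obtain ⟨-, p, hpcls, hp1, hp2⟩ := Finset.mem_filter.1 hx
    obtain ⟨hpe, hpc⟩ := Finset.mem_filter.1 hpcls
    obtain ⟨-, -, hlt⟩ := mem_edg.1 hpe
    exact Finset.mem_image.2 ⟨p, mem_edg.2 ⟨Finset.mem_compl.2 hp1, Finset.mem_compl.2 hp2, hlt⟩, hpc⟩

include hsymm hproper in
lemma percolour (r : ℕ) (hpar : n = 2*r+2 ∨ n = 2*r+3) (hn5 : 5 ≤ n) {χ : ℕ}
    (hχ : 1 ≤ (cls c χ).card) :
    (cls c χ).card * (n.choose r) + (if (cls c χ).card ≤ r then 1 else 0)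
      ≤ (r+1) * (((powersetCard r (univ : Finset (Fin n))).filter (fun O => capt c χ O)).card) := by
  classical
  set a := (cls c χ).card with hadef
  set C := n.choose r with hCdef
  set Q := ((powersetCard r (univ : Finset (Fin n))).filter (fun O => capt c χ O)).card with hQdef
  set Ms := ((powersetCard r (univ : Finset (Fin n))).filter (fun O => ¬ capt c χ O)).card with hMdef
  have h𝒪card : (powersetCard r (univ : Finset (Fin n))).card = C := by
    rw [Finset.card_powersetCard]; simp [hCdef]
  have hsplit : Q + Ms = C := by
    rw [hQdef, hMdef, ← h𝒪card]
    exact Finset.card_filter_add_card_filter_not _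
  by_cases hsmall : a ≤ r
  · rw [if_pos hsmall]
    rcases eq_or_lt_of_le hχ with h1|h2
    · -- a = 1
      have hQ1 : (n-2).choose r ≤ Q := capt_single c hsymm hproper h1.symm
      have hL1 := L1 n r hpar hn5
      calc a * C + 1 = C + 1 := by rw [← h1]; ring
      _ ≤ (r+1) * ((n-2).choose r) := hL1
      _ ≤ (r+1) * Q := Nat.mul_le_mul_left _ hQ1
    · -- 2 ≤ a
      have h2a : 2 ≤ a := h2
      have hmiss : Ms ≤ 2^a * (n-a).choose (r-a) := miss_le c hsymm hproper r hsmall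
      have hL2 := L2 n r hpar a h2a hsmall
      have i1 : (r+1)*Ms ≤ (r+1)*(2^a * (n-a).choose (r-a)) := Nat.mul_le_mul_left _ hmiss
      have e : (r+1)*Q + (r+1)*Ms = (r+1)*C := by rw [← Nat.mul_add, hsplit]
      have hfin : a*C + 1 + (r+1)*Ms ≤ (r+1)*Q + (r+1)*Ms := by
        calc a*C + 1 + (r+1)*Ms
            ≤ a*C + 1 + (r+1)*(2^a * (n-a).choose (r-a)) := Nat.add_le_add_left i1 _
        _ ≤ (r+1)*C := by linarith [hL2]
        _ = (r+1)*Q + (r+1)*Ms := e.symm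
      exact Nat.le_of_add_le_add_right hfin
  · rw [if_neg hsmall]
    have hbig : r + 1 ≤ a := by omega
    have hQC : Q = C := by
      rw [hQdef, ← h𝒪card]
      congr 1
      apply Finset.filter_true_of_mem
      intro O hO
      exact capt_of_big c hsymm hproper (Finset.mem_powersetCard.1 hO).2 hbig
    rw [hQC]
    have h2a := cls_card_le c hsymm hproper χ
    have haA : a ≤ r + 1 := by omega
    simpa using Nat.mul_le_mul_right C haA

end Aux7G

set_option maxHeartbeats 1600000 in
open Aux7 Aux7X Aux7G in
theorem stmt7 (n : ℕ) (hn : 5 ≤ n) (c : Fin n → Fin n → ℕ)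
    (hsymm : ∀ i j, c i j = c j i)
    (hproper : ∀ i j k : Fin n, i ≠ j → i ≠ k → j ≠ k → c i j ≠ c i k)
    (hcolours : n ≤ (((univ ×ˢ univ : Finset (Fin n × Fin n)).filter
        fun p => p.1 ≠ p.2).image fun p => c p.1 p.2).card) :
    ∃ U : Finset (Fin n), U.card = (n + 3) / 2 ∧
      n ≤ (((U ×ˢ U).filter fun p => p.1 ≠ p.2).image fun p => c p.1 p.2).card := by
  set r := n - (n+3)/2 with hrdef
  have hpar : n = 2*r+2 ∨ n = 2*r+3 := by omega
  set Λ := colS c (univ : Finset (Fin n)) with hΛdef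
  have hΛ : n ≤ Λ.card := by
    rw [colS_eq c hsymm univ] at hcolours
    exact hcolours
  set C := n.choose r with hCdef
  have hC1 : 1 ≤ C := Nat.choose_pos (by omega)
  set 𝒪 := powersetCard r (univ : Finset (Fin n)) with h𝒪def
  have h𝒪card : 𝒪.card = C := by
    rw [h𝒪def, Finset.card_powersetCard]
    simp [hCdef]
  set T := ∑ χ ∈ Λ, ((𝒪.filter (fun O => capt c χ O)).card) with hTdef
  set S1 := ∑ χ ∈ Λ, (if (cls c χ).card ≤ r then 1 else 0) with hS1def
  have hper : ∀ χ ∈ Λ, (cls c χ).card * C + (if (cls c χ).card ≤ r then 1 else 0)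
      ≤ (r+1) * ((𝒪.filter (fun O => capt c χ O)).card) := by
    intro χ hχ
    exact percolour c hsymm hproper r hpar hn (cls_pos c hχ)
  have hsum1 : ∑ χ ∈ Λ, ((cls c χ).card * C + (if (cls c χ).card ≤ r then 1 else 0))
      ≤ (r+1) * T := by
    rw [hTdef, Finset.mul_sum]
    exact Finset.sum_le_sum hper
  have hE := edg_card (n := n)
  have hsumc : ∑ χ ∈ Λ, (cls c χ).card = (edg (univ : Finset (Fin n))).card := sum_cls c
  set E := (edg (univ : Finset (Fin n))).card with hEdef
  have hsplitsum : ∑ χ ∈ Λ, ((cls c χ).card * C + (if (cls c χ).card ≤ r then 1 else 0))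
      = E * C + S1 := by
    rw [Finset.sum_add_distrib, ← Finset.sum_mul, hsumc, hS1def]
  have hmain : (n-1) * ((r+1) * C) + 1 ≤ (r+1) * T := by
    rcases hpar with h|h
    · have hEval : E = 2*r^2+3*r+1 := by
        have h2 : 2*E + (2*r+2) = (2*r+2)*(2*r+2) := by rw [← h]; exact hE
        nlinarith [h2]
      obtain ⟨χ₀, hχ₀, hsm⟩ : ∃ χ ∈ Λ, (cls c χ).card ≤ r := by
        by_contra hc
        push_neg at hc
        have hlow : ∀ χ ∈ Λ, r+1 ≤ (cls c χ).card := fun χ hχ => hc χ hχ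
        have hbig := Finset.card_nsmul_le_sum Λ (fun χ => (cls c χ).card) (r+1) hlow
        rw [hsumc, smul_eq_mul] at hbig
        have hup : n * (r+1) ≤ E := le_trans (Nat.mul_le_mul_right _ hΛ) hbig
        nlinarith [hup, hEval, h]
      have hS1 : 1 ≤ S1 := by
        have := Finset.single_le_sum (f := fun χ => (if (cls c χ).card ≤ r then 1 else 0))
          (fun i _ => Nat.zero_le _) hχ₀
        rw [hS1def]
        simpa [hsm] using this
      have hfin : (n-1) * ((r+1)*C) + 1 ≤ E*C + S1 := by
        have hn1 : n - 1 = 2*r+1 := by omega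
        rw [hn1, hEval]
        nlinarith [hS1]
      calc (n-1) * ((r+1) * C) + 1 ≤ E*C + S1 := hfin
      _ = ∑ χ ∈ Λ, ((cls c χ).card * C + (if (cls c χ).card ≤ r then 1 else 0)) := by
          rw [hsplitsum]
      _ ≤ (r+1) * T := hsum1
    · have hEval : E = 2*r^2+5*r+3 := by
        have h2 : 2*E + (2*r+3) = (2*r+3)*(2*r+3) := by rw [← h]; exact hE
        nlinarith [h2]
      have hfin : (n-1) * ((r+1)*C) + 1 ≤ E*C := by
        have hn1 : n - 1 = 2*r+2 := by omega
        rw [hn1, hEval]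
        nlinarith [hC1, Nat.zero_le (r*C)]
      calc (n-1) * ((r+1) * C) + 1 ≤ E*C := hfin
      _ ≤ E*C + S1 := Nat.le_add_right _ _
      _ = ∑ χ ∈ Λ, ((cls c χ).card * C + (if (cls c χ).card ≤ r then 1 else 0)) := by
          rw [hsplitsum]
      _ ≤ (r+1) * T := hsum1
  obtain ⟨O, hO, hOn⟩ : ∃ O ∈ 𝒪, n ≤ (colS c Oᶜ).card := by
    by_contra hno
    push_neg at hno
    have hub := Finset.sum_le_card_nsmul 𝒪 (fun O => (colS c Oᶜ).card) (n-1)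
      (fun O hO => Nat.le_sub_one_of_lt (hno O hO))
    rw [smul_eq_mul] at hub
    have heqT : ∑ O ∈ 𝒪, (colS c Oᶜ).card = T := by
      rw [hTdef]
      have hc : ∀ O ∈ 𝒪, (colS c Oᶜ).card = (Λ.filter (fun χ => capt c χ O)).card := by
        intro O _
        rw [hΛdef, colS_compl c O]
      rw [Finset.sum_congr rfl hc]
      simp_rw [Finset.card_filter]
      exact Finset.sum_comm
    rw [heqT, h𝒪card] at hub
    have hub2 := Nat.mul_le_mul_left (r+1) hub
    nlinarith [hmain, hub2]
  refine ⟨Oᶜ, ?_, ?_⟩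
  · rw [h𝒪def] at hO
    have hOcard : O.card = r := (Finset.mem_powersetCard.1 hO).2
    rw [Finset.card_compl, Fintype.card_fin, hOcard]
    omega
  · rw [colS_eq c hsymm Oᶜ]
    exact hOn
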